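/- arXiv:1805.06583 — 2 statements merged into one kernel-verified Lean document; each statement's English description precedes it below -/
import Mathlib

section
/- Let S be a random variable with cumulative distribution function F_S(s) = C(M-1,N-1)·s^{M-N} for s ∈ [0,δ] and F_S(s) = 1 for s ∈ (δ,1], where δ = C(M-1,N-1)^{-1/(M-N)} and M > N ≥ 1 are integers. Let G be the maximum of 1 - S over Q independent copies of S, i.e., G has cdf F_G(g) = (1 - C(M-1,N-1)(1-g)^{M-N})^Q on [1-δ, 1]. Then E[G] = 1 - Q · C(M-1,N-1)^{-1/(M-N)} · B(Q, (M-N+1)/(M-N)). -/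
open MeasureTheory ProbabilityTheory

/-- Real Beta function `B(x,y) = Γ(x)Γ(y)/Γ(x+y)`. -/
noncomputable def realBeta (x y : ℝ) : ℝ := Real.Gamma x * Real.Gamma y / Real.Gamma (x + y)

open Finset in
lemma sumA : ∀ (n : ℕ) (x : ℝ), 0 < x →
    ∑ k ∈ range (n+1), (n.choose k : ℝ) * (-1)^k / (x + k)
      = (n.factorial : ℝ) / ∏ j ∈ range (n+1), (x + j) := by
  intro n
  induction n with
  | zero => intro x hx; simp
  | succ n ih =>
    intro x hx
    have hprodpos : ∀ (y : ℝ) (m : ℕ), 0 < y → 0 < ∏ j ∈ range m, (y + j) := by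
      intro y m hy
      exact Finset.prod_pos (fun j _ => by positivity)
    have key : ∑ k ∈ range (n+2), ((n+1).choose k : ℝ) * (-1)^k / (x + k)
        = (∑ k ∈ range (n+1), (n.choose k : ℝ) * (-1)^k / (x + k))
          - ∑ k ∈ range (n+1), (n.choose k : ℝ) * (-1)^k / ((x+1) + k) := by
      rw [Finset.sum_range_succ' (fun k => ((n+1).choose k : ℝ) * (-1)^k / (x + k)) (n+1)]
      have h1 : ∀ k ∈ range (n+1), ((n+1).choose (k+1) : ℝ) * (-1)^(k+1) / (x + ((k+1 : ℕ) : ℝ))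
          = (n.choose k : ℝ) * (-1)^(k+1) / (x + ((k+1 : ℕ) : ℝ))
            + (n.choose (k+1) : ℝ) * (-1)^(k+1) / (x + ((k+1 : ℕ) : ℝ)) := by
        intro k _
        rw [Nat.choose_succ_succ]
        push_cast
        ring
      rw [Finset.sum_congr rfl h1, Finset.sum_add_distrib]
      have h2 : ∑ k ∈ range (n+1), (n.choose k : ℝ) * (-1)^(k+1) / (x + ((k+1 : ℕ) : ℝ))
          = - ∑ k ∈ range (n+1), (n.choose k : ℝ) * (-1)^k / ((x+1) + k) := by
        rw [← Finset.sum_neg_distrib]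
        refine Finset.sum_congr rfl fun k _ => ?_
        push_cast
        ring
      have h3 : ∑ k ∈ range (n+1), (n.choose (k+1) : ℝ) * (-1)^(k+1) / (x + ((k+1 : ℕ) : ℝ))
            + ((n+1).choose 0 : ℝ) * (-1)^0 / (x + ((0 : ℕ) : ℝ))
          = ∑ k ∈ range (n+1), (n.choose k : ℝ) * (-1)^k / (x + k) := by
        rw [Finset.sum_range_succ' (fun k => (n.choose k : ℝ) * (-1)^k / (x + k)) n,
          Finset.sum_range_succ
            (fun k => (n.choose (k+1) : ℝ) * (-1)^(k+1) / (x + ((k+1 : ℕ) : ℝ))) n]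
        simp [Nat.choose_succ_self]
      rw [h2]
      linarith [h3]
    rw [key, ih x hx, ih (x+1) (by linarith)]
    have e1 : ∏ j ∈ range (n+1), ((x+1) + (j : ℝ)) = (∏ j ∈ range (n+2), (x + (j : ℝ))) / x := by
      rw [Finset.prod_range_succ' (fun j => x + (j:ℝ)) (n+1), eq_div_iff hx.ne']
      have : ∏ j ∈ range (n+1), (x + ((j+1 : ℕ) : ℝ)) = ∏ j ∈ range (n+1), ((x+1) + (j:ℝ)) :=
        Finset.prod_congr rfl (fun j _ => by push_cast; ring)
      rw [this]
      push_cast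
      ring
    have e2 : ∏ j ∈ range (n+2), (x + (j : ℝ)) = (∏ j ∈ range (n+1), (x + (j : ℝ))) * (x + (n+1)) := by
      rw [Finset.prod_range_succ]; push_cast; ring_nf
    have p1 := hprodpos x (n+1) hx
    rw [e1, e2]
    have hfact : (((n+1).factorial : ℕ) : ℝ) = ((n:ℝ)+1) * (n.factorial : ℝ) := by
      push_cast [Nat.factorial_succ]; ring
    field_simp
    rw [hfact]
    ring

open Finset in
lemma gammaProd (x : ℝ) (hx : 0 < x) : ∀ (n : ℕ),
    Real.Gamma (x + n) = Real.Gamma x * ∏ j ∈ range n, (x + j) := by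
  intro n
  induction n with
  | zero => simp
  | succ n ih =>
    have h1 : x + ((n+1 : ℕ) : ℝ) = (x + n) + 1 := by push_cast; ring
    rw [h1, Real.Gamma_add_one (by positivity), ih, Finset.prod_range_succ]
    ring

open Finset in
lemma betaNat (n : ℕ) (hn : 1 ≤ n) (y : ℝ) (hy : 0 < y) :
    realBeta (n : ℝ) y = ((n-1).factorial : ℝ) / ∏ j ∈ range n, (y + j) := by
  obtain ⟨m, rfl⟩ := Nat.exists_eq_add_of_le hn
  have h1 : ((1 + m : ℕ) : ℝ) = (m : ℝ) + 1 := by push_cast; ring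
  have h2 : Real.Gamma ((1 + m : ℕ) : ℝ) = (m.factorial : ℝ) := by
    rw [h1]; exact_mod_cast Real.Gamma_nat_eq_factorial m
  have h3 : Real.Gamma ((1 + m : ℕ) + y) = Real.Gamma y * ∏ j ∈ range (1+m), (y + j) := by
    have : ((1 + m : ℕ) : ℝ) + y = y + ((1+m : ℕ) : ℝ) := by ring
    rw [this, gammaProd y hy]
  have hy0 : Real.Gamma y ≠ 0 := (Real.Gamma_pos_of_pos hy).ne'
  have hp : (∏ j ∈ range (1+m), (y + j)) ≠ 0 :=
    (Finset.prod_pos (fun j _ => by positivity)).ne'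
  rw [realBeta, h2, h3]
  have : (1 + m - 1) = m := by omega
  rw [this]
  field_simp

lemma supSub {ι : Type*} [Nonempty ι] [Finite ι] (f : ι → ℝ) :
    (⨆ i, (1 - f i)) = 1 - ⨅ i, f i := by
  obtain ⟨j, hj⟩ := exists_eq_ciInf_of_finite (f := f)
  apply le_antisymm
  · refine ciSup_le fun i => ?_
    have h1 : (⨅ i, f i) ≤ f i := ciInf_le (Set.Finite.bddBelow (Set.finite_range f)) i
    linarith
  · rw [← hj]
    exact le_ciSup (Set.Finite.bddAbove (Set.finite_range (fun i => 1 - f i))) j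

lemma ltInf {ι : Type*} [Nonempty ι] [Finite ι] (f : ι → ℝ) (t : ℝ) :
    t < (⨅ i, f i) ↔ ∀ i, t < f i := by
  constructor
  · intro h i
    exact h.trans_le (ciInf_le (Set.Finite.bddBelow (Set.finite_range f)) i)
  · intro h
    obtain ⟨j, hj⟩ := exists_eq_ciInf_of_finite (f := f)
    rw [← hj]; exact h j

/-- Proposition 1: expectation of the largest normalized beamforming gain
`G = max_{i < Q} (1 - S_i)` for `Q` i.i.d. quantization errors `S_i` with the
quantization-error cdf of QBC. -/
theorem stmt2 {Ω : Type*} [MeasurableSpace Ω] (μ : Measure Ω) [IsProbabilityMeasure μ]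
    (M N Q : ℕ) (hN : 1 ≤ N) (hMN : N < M) (hQ : 1 ≤ Q)
    (δ : ℝ) (hδ : δ = ((M - 1).choose (N - 1) : ℝ) ^ (-(1 : ℝ) / ((M : ℝ) - N)))
    (S : Fin Q → Ω → ℝ) (hmeas : ∀ i, Measurable (S i))
    (hindep : iIndepFun S μ)
    (h01 : ∀ i, ∀ ω : Ω, S i ω ∈ Set.Icc (0 : ℝ) 1)
    (hcdf₁ : ∀ i, ∀ s ∈ Set.Icc (0 : ℝ) δ,
      (μ {ω : Ω | S i ω ≤ s}).toReal = ((M - 1).choose (N - 1) : ℝ) * s ^ (M - N))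
    (hcdf₂ : ∀ i, ∀ s ∈ Set.Ioc δ (1 : ℝ), (μ {ω : Ω | S i ω ≤ s}).toReal = 1) :
    ∫ ω, (⨆ i, (1 - S i ω)) ∂μ
      = 1 - (Q : ℝ) * ((M - 1).choose (N - 1) : ℝ) ^ (-(1 : ℝ) / ((M : ℝ) - N)) *
          realBeta (Q : ℝ) (((M : ℝ) - N + 1) / ((M : ℝ) - N)) := by
  haveI : Nonempty (Fin Q) := Fin.pos_iff_nonempty.mp hQ
  set K : ℝ := ((M - 1).choose (N - 1) : ℝ) with hKdef
  set m : ℕ := M - N with hmdef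
  have hm1 : 1 ≤ m := by omega
  have hmR : (m : ℝ) = (M : ℝ) - N := by
    rw [hmdef]; push_cast [Nat.cast_sub hMN.le]; ring
  have hmRpos : (0:ℝ) < m := by positivity
  have hK1 : (1:ℝ) ≤ K := by
    rw [hKdef]
    exact_mod_cast Nat.one_le_iff_ne_zero.mpr (Nat.choose_pos (by omega)).ne'
  have hKpos : (0:ℝ) < K := lt_of_lt_of_le one_pos hK1
  have hδeq : δ = K ^ (-(1:ℝ) / (m:ℝ)) := by rw [hδ, hmR]
  have hδpos : 0 < δ := by rw [hδeq]; positivity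
  have hδ1 : δ ≤ 1 := by
    rw [hδeq]
    exact Real.rpow_le_one_of_one_le_of_nonpos hK1
      (by rw [neg_div]; exact neg_nonpos.mpr (div_nonneg zero_le_one hmRpos.le))
  have hδm : K * δ ^ m = 1 := by
    rw [hδeq, ← Real.rpow_natCast (K ^ (-(1:ℝ)/(m:ℝ))) m, ← Real.rpow_mul hKpos.le]
    rw [div_mul_cancel₀ _ (by positivity : (m:ℝ) ≠ 0)]
    rw [Real.rpow_neg_one]
    field_simp
  -- the minimum
  set T : Ω → ℝ := fun ω => ⨅ i, S i ω with hTdef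
  have hT01 : ∀ ω, T ω ∈ Set.Icc (0:ℝ) 1 := by
    intro ω
    constructor
    · exact le_ciInf fun i => (h01 i ω).1
    · obtain ⟨j, hj⟩ := exists_eq_ciInf_of_finite (f := fun i => S i ω)
      rw [hTdef]
      simp only
      rw [← hj]
      exact (h01 j ω).2
  have hTmeas : Measurable T := Measurable.iInf hmeas
  have hTint : Integrable T μ := by
    refine Integrable.mono' (integrable_const 1) hTmeas.aestronglyMeasurable ?_
    filter_upwards with ω
    rw [Real.norm_eq_abs, abs_le]
    exact ⟨by linarith [(hT01 ω).1], (hT01 ω).2⟩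
  have step1 : ∫ ω, (⨆ i, (1 - S i ω)) ∂μ = 1 - ∫ ω, T ω ∂μ := by
    have h : ∀ ω, (⨆ i, (1 - S i ω)) = 1 - T ω := fun ω => supSub _
    simp_rw [h]
    rw [integral_sub (integrable_const 1) hTint, integral_const]
    simp
  have step2 : ∫ ω, T ω ∂μ = ∫ t in Set.Ioi (0:ℝ), (μ {a | t < T a}).toReal := by
    exact hTint.integral_eq_integral_meas_lt (ae_of_all _ fun ω => (hT01 ω).1)
  -- tail probabilities
  have hfactor : ∀ (i : Fin Q), ∀ t : ℝ, 0 < t →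
      (μ {ω | t < S i ω}).toReal = if t ≤ δ then 1 - K * t ^ m else 0 := by
    intro i t ht
    have hcompl : {ω | t < S i ω} = {ω | S i ω ≤ t}ᶜ := by
      ext ω; simp [not_le]
    have hms : MeasurableSet {ω | S i ω ≤ t} := hmeas i measurableSet_Iic
    have htoReal : (μ {ω | t < S i ω}).toReal = 1 - (μ {ω | S i ω ≤ t}).toReal := by
      rw [hcompl, prob_compl_eq_one_sub hms,
        ENNReal.toReal_sub_of_le prob_le_one ENNReal.one_ne_top, ENNReal.toReal_one]
    by_cases h1 : t ≤ δ
    · rw [if_pos h1, htoReal, hcdf₁ i t ⟨ht.le, h1⟩]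
    · rw [if_neg h1]
      push_neg at h1
      by_cases h2 : t ≤ 1
      · rw [htoReal, hcdf₂ i t ⟨h1, h2⟩]; ring
      · push_neg at h2
        have : {ω | t < S i ω} = ∅ := by
          ext ω
          simp only [Set.mem_setOf_eq, Set.mem_empty_iff_false, iff_false, not_lt]
          exact le_trans (h01 i ω).2 h2.le
        rw [this]
        simp
  have hprod : ∀ t ∈ Set.Ioi (0:ℝ),
      (μ {a | t < T a}).toReal
        = (Set.Ioc (0:ℝ) δ).indicator (fun t => (1 - K * t ^ m) ^ Q) t := by
    intro t ht
    rw [Set.mem_Ioi] at ht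
    have hset : {a | t < T a} = ⋂ i, {ω | t < S i ω} := by
      ext ω
      simp only [Set.mem_setOf_eq, Set.mem_iInter, hTdef]
      exact ltInf _ t
    have hmsi : ∀ i : Fin Q,
        MeasurableSet[MeasurableSpace.comap (S i) inferInstance] {ω | t < S i ω} :=
      fun i => MeasurableSpace.measurableSet_comap.mpr ⟨Set.Ioi t, measurableSet_Ioi, rfl⟩
    have hmi := hindep.meas_iInter (s := fun i => {ω | t < S i ω}) hmsi
    rw [hset, hmi, ENNReal.toReal_prod]
    have := fun i : Fin Q => hfactor i t ht
    by_cases h1 : t ≤ δ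
    · have hind : (Set.Ioc (0:ℝ) δ).indicator (fun t => (1 - K * t ^ m) ^ Q) t
          = (1 - K * t ^ m) ^ Q := Set.indicator_of_mem (show t ∈ Set.Ioc (0:ℝ) δ from ⟨ht, h1⟩) _
      rw [hind]
      simp_rw [this, if_pos h1]
      rw [Finset.prod_const, Finset.card_univ, Fintype.card_fin]
    · have hind : (Set.Ioc (0:ℝ) δ).indicator (fun t => (1 - K * t ^ m) ^ Q) t = 0 :=
        Set.indicator_of_notMem (fun hc => h1 hc.2) _
      rw [hind]
      simp_rw [this, if_neg h1]
      rw [Finset.prod_const, Finset.card_univ, Fintype.card_fin]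
      exact zero_pow (by omega)
  have step3 : ∫ t in Set.Ioi (0:ℝ), (μ {a | t < T a}).toReal
      = ∫ t in (0:ℝ)..δ, (1 - K * t ^ m) ^ Q := by
    rw [setIntegral_congr_fun measurableSet_Ioi hprod,
      integral_indicator measurableSet_Ioc,
      Measure.restrict_restrict measurableSet_Ioc,
      Set.inter_eq_self_of_subset_left (fun x hx => hx.1),
      intervalIntegral.integral_of_le hδpos.le]
  -- compute the interval integral
  have hpt : ∀ t : ℝ, (1 - K * t ^ m) ^ Q
      = ∑ k ∈ Finset.range (Q+1), (Q.choose k : ℝ) * (-1)^k * K^k * t^(m*k) := by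
    intro t
    rw [sub_eq_add_neg, add_comm, add_pow]
    refine Finset.sum_congr rfl fun k _ => ?_
    rw [neg_pow, mul_pow, ← pow_mul, one_pow]
    ring
  have step4 : ∫ t in (0:ℝ)..δ, (1 - K * t ^ m) ^ Q
      = ∑ k ∈ Finset.range (Q+1), (Q.choose k : ℝ) * (-1)^k * K^k * (δ^(m*k+1) / (m*k+1)) := by
    simp_rw [hpt]
    rw [intervalIntegral.integral_finset_sum]
    · refine Finset.sum_congr rfl fun k _ => ?_
      rw [intervalIntegral.integral_const_mul, integral_pow]
      rw [zero_pow (by omega)]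
      push_cast
      ring
    · intro k _
      exact ((continuous_const.mul (continuous_pow (m*k))).intervalIntegrable _ _)
  have step5 : ∑ k ∈ Finset.range (Q+1), (Q.choose k : ℝ) * (-1)^k * K^k * (δ^(m*k+1) / (m*k+1))
      = (δ / m) * ∑ k ∈ Finset.range (Q+1), (Q.choose k : ℝ) * (-1)^k / ((1/(m:ℝ)) + k) := by
    rw [Finset.mul_sum]
    refine Finset.sum_congr rfl fun k _ => ?_
    have hKδ : K^k * δ^(m*k) = 1 := by
      rw [pow_mul, ← mul_pow, hδm, one_pow]
    have hden : ((m:ℝ) * k + 1) = (m:ℝ) * (1/(m:ℝ) + k) := by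
      field_simp
      ring
    rw [pow_succ, hden]
    calc (Q.choose k : ℝ) * (-1)^k * K^k * (δ^(m*k) * δ / ((m:ℝ) * (1/(m:ℝ) + k)))
        = (K^k * δ^(m*k)) * ((Q.choose k : ℝ) * (-1)^k * δ / ((m:ℝ) * (1/(m:ℝ) + k))) := by
          ring
      _ = δ / m * ((Q.choose k : ℝ) * (-1)^k / (1/(m:ℝ) + k)) := by
          rw [hKδ, one_mul, div_mul_div_comm]
          rw [show (1:ℝ)/(m:ℝ) = ((m:ℝ))⁻¹ from one_div _] at *
          ring
  have hx : (0:ℝ) < 1/(m:ℝ) := by positivity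
  rw [step1, step2, step3, step4, step5, sumA Q (1/(m:ℝ)) hx, ← hmR, ← hδeq,
    betaNat Q hQ (((m:ℝ)+1)/(m:ℝ)) (by positivity)]
  congr 1
  have hyj : ∀ j ∈ Finset.range Q, (((m:ℝ)+1)/(m:ℝ) + (j:ℝ)) = (1/(m:ℝ) + ((j+1:ℕ):ℝ)) := by
    intro j _
    push_cast
    field_simp
    ring
  rw [Finset.prod_congr rfl hyj]
  have hsplit : ∏ j ∈ Finset.range (Q+1), (1/(m:ℝ) + (j:ℝ))
      = (∏ j ∈ Finset.range Q, (1/(m:ℝ) + ((j+1:ℕ):ℝ))) * (1/(m:ℝ)) := by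
    rw [Finset.prod_range_succ' (fun j => 1/(m:ℝ) + (j:ℝ)) Q]
    norm_num
  rw [hsplit]
  have hQfact : (Q.factorial : ℝ) = (Q:ℝ) * ((Q-1).factorial : ℝ) := by
    have h : Q - 1 + 1 = Q := Nat.succ_pred_eq_of_pos hQ
    rw [← h, Nat.factorial_succ]
    push_cast
    ring
  have hpp : (0:ℝ) < ∏ j ∈ Finset.range Q, (1/(m:ℝ) + ((j+1:ℕ):ℝ)) :=
    Finset.prod_pos (fun j _ => by positivity)
  rw [hQfact]
  field_simp
end

section
/- For M > N ≥ 1 and Q ≥ 1, the quantity ω(Q) = Q · C(M-1,N-1)^{-1/(M-N)} · B(Q, (M-N+1)/(M-N)) is strictly decreasing in Q and tends to 0 as Q → ∞. -/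
open Filter Real

/-- `ω(Q) = Q · C(M-1,N-1)^{-1/(M-N)} · B(Q, (M-N+1)/(M-N))`. -/
noncomputable def omegaQ (M N Q : ℕ) : ℝ :=
  (Q : ℝ) * ((M - 1).choose (N - 1) : ℝ) ^ (-(1 : ℝ) / ((M : ℝ) - N)) *
    realBeta (Q : ℝ) (((M : ℝ) - N + 1) / ((M : ℝ) - N))

theorem stmt6 (M N : ℕ) (hN : 1 ≤ N) (hMN : N < M) :
    (∀ q₁ q₂ : ℕ, 1 ≤ q₁ → q₁ < q₂ → omegaQ M N q₂ < omegaQ M N q₁) ∧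
      Tendsto (fun Q : ℕ => omegaQ M N Q) atTop (nhds 0) := by
  have hd0 : (0:ℝ) < (M:ℝ) - N := by
    have : (N:ℝ) < M := by exact_mod_cast hMN
    linarith
  set d : ℝ := (M:ℝ) - N with hd
  set s : ℝ := (d + 1) / d with hs
  have hs1 : 1 < s := by
    rw [hs, lt_div_iff₀ hd0]; linarith
  have hs0 : 0 < s := lt_trans one_pos hs1
  set c : ℝ := ((M - 1).choose (N - 1) : ℝ) ^ (-(1:ℝ)/d) with hc
  have hc0 : 0 < c := by
    apply Real.rpow_pos_of_pos
    exact_mod_cast Nat.choose_pos (by omega)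
  set g : ℕ → ℝ := fun n => (n:ℝ) * realBeta (n:ℝ) s with hg
  have homega : ∀ q : ℕ, omegaQ M N q = c * g q := by
    intro q
    simp only [omegaQ, hg, hc, hs, hd]
    ring
  -- product form
  set P : ℕ → ℝ := fun n => ∏ j ∈ Finset.range n, (s + j) with hP
  have hPpos : ∀ n, 0 < P n := by
    intro n
    apply Finset.prod_pos
    intro j _
    positivity
  have hGadd : ∀ n : ℕ, Real.Gamma (s + n) = Real.Gamma s * P n := by
    intro n
    induction n with
    | zero => simp [hP]
    | succ k ih =>
      have hne : s + (k:ℝ) ≠ 0 := by positivity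
      have : s + ((k:ℕ)+1 : ℕ) = (s + k) + 1 := by push_cast; ring
      rw [this, Real.Gamma_add_one hne, ih]
      simp only [hP, Finset.prod_range_succ]
      ring
  have hGs : Real.Gamma s ≠ 0 := ne_of_gt (Real.Gamma_pos_of_pos hs0)
  have hgEq : ∀ n : ℕ, 1 ≤ n → g n = (Nat.factorial n : ℝ) / P n := by
    intro n hn
    obtain ⟨m, rfl⟩ := Nat.exists_eq_add_of_le hn
    have h1 : ((1 + m : ℕ) : ℝ) = (m:ℝ) + 1 := by push_cast; ring
    have h2 : Real.Gamma ((1 + m : ℕ) : ℝ) = (Nat.factorial m : ℝ) := by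
      rw [h1]; exact_mod_cast Real.Gamma_nat_eq_factorial m
    have h3 : Real.Gamma (((1 + m : ℕ) : ℝ) + s) = Real.Gamma s * P (1 + m) := by
      rw [add_comm, ← hGadd]
    simp only [hg, realBeta, h2, h3]
    rw [h1]
    have h4 : (Nat.factorial (1 + m) : ℝ) = ((m:ℝ) + 1) * (Nat.factorial m : ℝ) := by
      rw [add_comm 1 m]
      push_cast [Nat.factorial_succ]
      ring
    rw [h4]
    field_simp
  have hgpos : ∀ n : ℕ, 1 ≤ n → 0 < g n := by
    intro n hn
    rw [hgEq n hn]
    have := hPpos n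
    positivity
  have hstep : ∀ n : ℕ, 1 ≤ n → g (n + 1) = g n * (((n:ℝ) + 1) / (s + n)) := by
    intro n hn
    rw [hgEq n hn, hgEq (n+1) (by omega)]
    simp only [hP]
    rw [Finset.prod_range_succ]
    have hPn := hPpos n
    have hsn : (0:ℝ) < s + n := by positivity
    have hPn' : (∏ x ∈ Finset.range n, (s + (x:ℝ))) ≠ 0 := by
      simpa [hP] using ne_of_gt hPn
    push_cast [Nat.factorial_succ]
    field_simp
  have hdec : ∀ q₁ q₂ : ℕ, 1 ≤ q₁ → q₁ < q₂ → g q₂ < g q₁ := by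
    intro q₁ q₂ h1 h2
    induction q₂ with
    | zero => omega
    | succ k ih =>
      have hk : 1 ≤ k := by omega
      have hlt : g (k+1) < g k := by
        rw [hstep k hk]
        have hsn : (0:ℝ) < s + k := by positivity
        have hratio : ((k:ℝ) + 1) / (s + k) < 1 := by
          rw [div_lt_one hsn]; linarith
        calc g k * (((k:ℝ) + 1) / (s + k)) < g k * 1 := by
              apply mul_lt_mul_of_pos_left hratio (hgpos k hk)
          _ = g k := mul_one _
      rcases Nat.lt_or_ge q₁ k with h | h
      · exact lt_trans hlt (ih h)
      · have : q₁ = k := by omega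
        rw [this]; exact hlt
  constructor
  · intro q₁ q₂ h1 h2
    rw [homega, homega]
    exact mul_lt_mul_of_pos_left (hdec q₁ q₂ h1 h2) hc0
  · -- limit
    have hGS : ∀ n : ℕ, 1 ≤ n →
        g n = Real.GammaSeq s n * ((s + n) * (n:ℝ) ^ (-s)) := by
      intro n hn
      have hn0 : (0:ℝ) < (n:ℝ) := by exact_mod_cast hn
      rw [hgEq n hn, Real.GammaSeq, Finset.prod_range_succ]
      simp only [hP]
      have hns : (0:ℝ) < (n:ℝ) ^ s := Real.rpow_pos_of_pos hn0 s
      have hPn := hPpos n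
      have hsn : (0:ℝ) < s + n := by positivity
      rw [Real.rpow_neg (le_of_lt hn0)]
      field_simp
    have hh : Tendsto (fun n : ℕ => (s + (n:ℝ)) * (n:ℝ) ^ (-s)) atTop (nhds 0) := by
      have h1 : Tendsto (fun n : ℕ => s * (n:ℝ) ^ (-s)) atTop (nhds 0) := by
        have := (tendsto_rpow_neg_atTop hs0).comp (tendsto_natCast_atTop_atTop : Tendsto (Nat.cast : ℕ → ℝ) atTop atTop)
        simpa using this.const_mul s
      have h2 : Tendsto (fun n : ℕ => (n:ℝ) ^ (1 - s)) atTop (nhds 0) := by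
        have := (tendsto_rpow_neg_atTop (by linarith : (0:ℝ) < s - 1)).comp
          (tendsto_natCast_atTop_atTop : Tendsto (Nat.cast : ℕ → ℝ) atTop atTop)
        simpa [neg_sub, Function.comp_def] using this
      have := h1.add h2
      rw [add_zero] at this
      apply this.congr'
      filter_upwards [eventually_ge_atTop 1] with n hn
      have hn0 : (0:ℝ) < (n:ℝ) := by exact_mod_cast hn
      have : (n:ℝ) ^ (1 - s) = (n:ℝ) ^ (1:ℝ) * (n:ℝ) ^ (-s) := by
        rw [← Real.rpow_add hn0]; ring_nf
      rw [this, Real.rpow_one]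
      ring
    have hgt : Tendsto g atTop (nhds 0) := by
      have := (Real.GammaSeq_tendsto_Gamma s).mul hh
      rw [mul_zero] at this
      apply this.congr'
      filter_upwards [eventually_ge_atTop 1] with n hn
      exact (hGS n hn).symm
    have : Tendsto (fun n : ℕ => c * g n) atTop (nhds (c * 0)) := hgt.const_mul c
    rw [mul_zero] at this
    exact this.congr fun n => (homega n).symm
end
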